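/- Let G be a finite simple graph comprised of communities C_1, …, C_r (r ≥ 2), all of which have the same size n. Let C_1, C_2 be two distinguished communities and let k be the total number of edges of G that are either intercommunity edges between C_1 and C_2, or intercommunity edges from any other community to C_1 or to C_2. If k ≤ n − 1, then for every α ∈ [0,1], every intercommunity edge e between C_1 and C_2 satisfies κ^α(e) ≤ 0. -/

import Mathlib

open Finset

/-- A probability measure on the vertex set. -/
def IsProbMeasure {V : Type*} [Fintype V] (μ : V → ℝ) : Prop :=
  (∀ z, 0 ≤ μ z) ∧ ∑ z, μ z = 1

/-- A transference plan between two probability measures. -/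
def IsTransferencePlan {V : Type*} [Fintype V] (μ ν : V → ℝ) (π : V → V → ℝ) : Prop :=
  (∀ i j, 0 ≤ π i j) ∧ (∀ i, ∑ j, π i j = μ i) ∧ (∀ j, ∑ i, π i j = ν j)

/-- The 1-Wasserstein distance between two measures on a graph:
the infimum of the transport cost over all transference plans. -/
noncomputable def Wass {V : Type*} [Fintype V] (G : SimpleGraph V) (μ ν : V → ℝ) : ℝ :=
  sInf {c : ℝ | ∃ π : V → V → ℝ, IsTransferencePlan μ ν π ∧
    c = ∑ i : V, ∑ j : V, π i j * (G.dist i j : ℝ)}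

open scoped Classical in
/-- The α-lazy random walk measure at a vertex `x`:
mass α at `x`, mass (1-α)/dₓ at each neighbour of `x`. -/
noncomputable def lazyWalk {V : Type*} [Fintype V] (G : SimpleGraph V) (α : ℝ) (x : V) :
    V → ℝ :=
  fun z =>
    if z = x then α
    else if G.Adj x z then (1 - α) / ((G.neighborSet x).ncard : ℝ) else 0

/-- The α-Ollivier-Ricci curvature of the edge `xy`: κ = 1 − W(mₓ, m_y). -/
noncomputable def kappa {V : Type*} [Fintype V] (G : SimpleGraph V) (α : ℝ) (x y : V) : ℝ :=
  1 - Wass G (lazyWalk G α x) (lazyWalk G α y)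

set_option linter.unusedSectionVars false
set_option maxHeartbeats 1000000

namespace CommAux

variable {V : Type*} [Fintype V]

/-- A vertex incident to an intercommunity edge. -/
def Bad {r : ℕ} (G : SimpleGraph V) (C : Fin r → Finset V) (v : V) : Prop :=
  ∃ w, G.Adj v w ∧ ¬∃ l, v ∈ C l ∧ w ∈ C l

open scoped Classical in
/-- The 1-Lipschitz witness function. -/
noncomputable def fco {r : ℕ} (G : SimpleGraph V) (C : Fin r → Finset V) (i j : Fin r)
    (v : V) : ℝ :=
  if v ∈ C i then (if Bad G C v then 1 else 2)
  else if v ∈ C j then (if Bad G C v then 0 else -1) else 1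

lemma fco_mem {r : ℕ} (G : SimpleGraph V) (C : Fin r → Finset V) (i j : Fin r) (v : V) :
    fco G C i j v = -1 ∨ fco G C i j v = 0 ∨ fco G C i j v = 1 ∨ fco G C i j v = 2 := by
  unfold fco; split_ifs <;> norm_num

lemma walk_cases {W : Type*} {G : SimpleGraph W} {u v : W} (p : G.Walk u v)
    (h : p.length ≤ 2) :
    u = v ∨ G.Adj u v ∨ ∃ w, G.Adj u w ∧ G.Adj w v := by
  match p with
  | SimpleGraph.Walk.nil => exact Or.inl rfl
  | SimpleGraph.Walk.cons h1 SimpleGraph.Walk.nil => exact Or.inr (Or.inl h1)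
  | SimpleGraph.Walk.cons h1 (SimpleGraph.Walk.cons h2 q) =>
      right; right
      have hq : q.length = 0 := by
        simp only [SimpleGraph.Walk.length_cons] at h; omega
      have := (SimpleGraph.Walk.eq_of_length_eq_zero hq)
      subst this
      exact ⟨_, h1, h2⟩

open scoped Classical in
lemma sum_mul_lazy (G : SimpleGraph V) (α : ℝ) (x : V) (g : V → ℝ) :
    ∑ z, g z * lazyWalk G α x z
      = α * g x + ((1 - α) / ((G.neighborSet x).ncard : ℝ)) *
          ∑ z ∈ Finset.univ.filter (fun z => G.Adj x z), g z := by
  classical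
  have hterm : ∀ z, g z * lazyWalk G α x z
      = (if z = x then α * g z else 0)
        + (if G.Adj x z then ((1 - α) / ((G.neighborSet x).ncard : ℝ)) * g z else 0) := by
    intro z
    unfold lazyWalk
    by_cases h1 : z = x
    · subst h1
      simp [G.irrefl, mul_comm]
    · by_cases h2 : G.Adj x z <;> simp [h1, h2, mul_comm]
  rw [Finset.sum_congr rfl fun z _ => hterm z, Finset.sum_add_distrib,
    Finset.sum_ite_eq' Finset.univ x (fun z => α * g z)]
  simp only [Finset.mem_univ, if_true, ← Finset.sum_filter, Finset.mul_sum]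

lemma lazy_nonneg (G : SimpleGraph V) {α : ℝ} (h0 : 0 ≤ α) (h1 : α ≤ 1) (x z : V) :
    0 ≤ lazyWalk G α x z := by
  unfold lazyWalk
  split_ifs with a b
  · exact h0
  · exact div_nonneg (by linarith) (Nat.cast_nonneg _)
  · exact le_refl 0

section Lip

variable {r : ℕ} {G : SimpleGraph V} {C : Fin r → Finset V} {i j : Fin r}

lemma fco_eq_two {v : V} (h : fco G C i j v = 2) : v ∈ C i ∧ ¬ Bad G C v := by
  by_contra hc
  unfold fco at h
  split_ifs at h with h1 h2 h3 h4 <;> first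
    | exact hc ⟨h1, h2⟩ | norm_num at h

lemma fco_eq_negone {v : V} (h : fco G C i j v = -1) : v ∈ C j ∧ ¬ Bad G C v := by
  by_contra hc
  unfold fco at h
  split_ifs at h with h1 h2 h3 h4 <;> first
    | exact hc ⟨h3, h4⟩ | norm_num at h

lemma fco_nonpos_memj {v : V} (h : fco G C i j v = 0 ∨ fco G C i j v = -1) : v ∈ C j := by
  rcases h with h | h <;> · unfold fco at h; split_ifs at h with h1 h2 h3 <;>
    first | exact h2 | exact h3 | norm_num at h

lemma fco_pos_notmemj {v : V} (h : fco G C i j v = 1 ∨ fco G C i j v = 2)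
    (huniq : ∀ {a : V} {l l' : Fin r}, a ∈ C l → a ∈ C l' → l = l') (hij : i ≠ j) :
    v ∉ C j := by
  intro hvj
  have hvi : v ∉ C i := fun hvi => hij (huniq hvi hvj)
  rcases h with h | h <;> · unfold fco at h; split_ifs at h with h1 h2 <;>
    first | exact hvi h1 | exact h2 hvj | norm_num at h

lemma good_adj {v w : V} {l : Fin r} (hv : v ∈ C l) (hg : ¬ Bad G C v) (ha : G.Adj v w)
    (huniq : ∀ {a : V} {l l' : Fin r}, a ∈ C l → a ∈ C l' → l = l') : w ∈ C l := by
  unfold Bad at hg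
  push_neg at hg
  obtain ⟨l', hvl', hwl'⟩ := hg w ha
  rwa [huniq hvl' hv] at hwl'

lemma fco_lip (huniq : ∀ {a : V} {l l' : Fin r}, a ∈ C l → a ∈ C l' → l = l') (hij : i ≠ j)
    {u v : V} (hreach : G.Reachable u v) :
    fco G C i j u - fco G C i j v ≤ (G.dist u v : ℝ) := by
  have h0 : (0:ℝ) ≤ (G.dist u v : ℝ) := Nat.cast_nonneg _
  have h1 : u ≠ v → (1:ℝ) ≤ (G.dist u v : ℝ) := by
    intro h
    exact_mod_cast hreach.pos_dist_of_ne h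
  have h2 : u ≠ v → ¬ G.Adj u v → (2:ℝ) ≤ (G.dist u v : ℝ) := by
    intro hne hadj
    have hd1 : G.dist u v ≠ 1 := fun h => hadj (SimpleGraph.dist_eq_one_iff_adj.mp h)
    have hd0 : 0 < G.dist u v := hreach.pos_dist_of_ne hne
    exact_mod_cast by omega
  have h3 : u ≠ v → ¬ G.Adj u v → (∀ w, ¬(G.Adj u w ∧ G.Adj w v)) →
      (3:ℝ) ≤ (G.dist u v : ℝ) := by
    intro hne hadj hcw
    have : 3 ≤ G.dist u v := by
      by_contra hlt
      push_neg at hlt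
      obtain ⟨p, hp⟩ := hreach.exists_walk_length_eq_dist
      rcases walk_cases p (by omega) with h | h | ⟨w, hw⟩
      · exact hne h
      · exact hadj h
      · exact hcw w hw
    exact_mod_cast this
  have hne_of : fco G C i j u ≠ fco G C i j v → u ≠ v := fun h hc => h (by rw [hc])
  rcases fco_mem G C i j u with hu | hu | hu | hu <;>
    rcases fco_mem G C i j v with hv | hv | hv | hv <;>
      rw [hu, hv]
  · linarith
  · linarith
  · linarith
  · linarith
  · have := h1 (hne_of (by rw [hu, hv]; norm_num))
    linarith
  · linarith
  · linarith
  · linarith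
  · obtain ⟨hvj, hvg⟩ := fco_eq_negone hv
    have hunj : u ∉ C j := fco_pos_notmemj (Or.inl hu) huniq hij
    have hnadj : ¬ G.Adj u v := fun ha =>
      hunj (good_adj hvj hvg ha.symm huniq)
    have := h2 (hne_of (by rw [hu, hv]; norm_num)) hnadj
    linarith
  · have := h1 (hne_of (by rw [hu, hv]; norm_num))
    linarith
  · linarith
  · linarith
  · obtain ⟨hui, hug⟩ := fco_eq_two hu
    obtain ⟨hvj, hvg⟩ := fco_eq_negone hv
    have hne' : u ≠ v := fun h => hij (huniq hui (h ▸ hvj))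
    have hnadj : ¬ G.Adj u v := fun ha => hij (huniq (good_adj hui hug ha huniq) hvj)
    have hcw : ∀ w, ¬(G.Adj u w ∧ G.Adj w v) := by
      rintro w ⟨hw1, hw2⟩
      exact hij (huniq (good_adj hui hug hw1 huniq) (good_adj hvj hvg hw2.symm huniq))
    have := h3 hne' hnadj hcw
    linarith
  · obtain ⟨hui, hug⟩ := fco_eq_two hu
    have hvj : v ∈ C j := fco_nonpos_memj (Or.inl hv)
    have hne' : u ≠ v := fun h => hij (huniq hui (h ▸ hvj))
    have hnadj : ¬ G.Adj u v := fun ha => hij (huniq (good_adj hui hug ha huniq) hvj)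
    have := h2 hne' hnadj
    linarith
  · have := h1 (hne_of (by rw [hu, hv]; norm_num))
    linarith
  · linarith

end Lip

open scoped Classical in
lemma inj_bound {r : ℕ} (G : SimpleGraph V) (C : Fin r → Finset V)
    (huniq : ∀ {a : V} {l l' : Fin r}, a ∈ C l → a ∈ C l' → l = l')
    (i j : Fin r) (x : V) (hx : x ∈ C i) :
    ((Finset.univ.filter (fun z => G.Adj x z)).filter (· ∉ C i)).card
      + (((C i).erase x).filter (Bad G C)).card
      ≤ {e ∈ G.edgeSet | ∃ u v : V, e = s(u, v) ∧ (u ∈ C i ∨ u ∈ C j) ∧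
          ¬ ∃ l, u ∈ C l ∧ v ∈ C l}.ncard := by
  classical
  set Ek : Set (Sym2 V) := {e ∈ G.edgeSet | ∃ u v : V, e = s(u, v) ∧ (u ∈ C i ∨ u ∈ C j) ∧
          ¬ ∃ l, u ∈ C l ∧ v ∈ C l} with hEk
  have hfin : Ek.Finite := Set.toFinite _
  rw [Set.ncard_eq_toFinset_card _ hfin]
  set A : Finset V := (Finset.univ.filter (fun z => G.Adj x z)).filter (· ∉ C i) with hA
  set B : Finset V := ((C i).erase x).filter (Bad G C) with hB
  have hAmem : ∀ a, a ∈ A → G.Adj x a ∧ a ∉ C i := by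
    intro a ha
    simp only [hA, Finset.mem_filter, Finset.mem_univ, true_and] at ha
    exact ha
  have hBmem : ∀ a, a ∈ B → (a ∈ C i ∧ a ≠ x) ∧ Bad G C a := by
    intro a ha
    simp only [hB, Finset.mem_filter, Finset.mem_erase] at ha
    exact ⟨⟨ha.1.2, ha.1.1⟩, ha.2⟩
  have hdisj : Disjoint A B := by
    rw [Finset.disjoint_left]
    intro a ha hb
    exact (hAmem a ha).2 (hBmem a hb).1.1
  rw [← Finset.card_union_of_disjoint hdisj]
  set φ : V → Sym2 V := fun z =>
    if h : Bad G C z ∧ z ∈ C i then s(z, h.1.choose) else s(x, z) with hφ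
  have hwit : ∀ (z : V) (h : Bad G C z ∧ z ∈ C i),
      G.Adj z h.1.choose ∧ h.1.choose ∉ C i := by
    intro z h
    obtain ⟨hadj, hnc⟩ := h.1.choose_spec
    refine ⟨hadj, fun hwi => hnc ⟨i, h.2, hwi⟩⟩
  apply Finset.card_le_card_of_injOn φ
  · intro a ha
    rw [Finset.mem_coe, Set.Finite.mem_toFinset]
    rcases Finset.mem_union.mp ha with ha | ha
    · obtain ⟨hadj, hnotCi⟩ := hAmem a ha
      have hc : ¬ (Bad G C a ∧ a ∈ C i) := fun h => hnotCi h.2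
      have : φ a = s(x, a) := by rw [hφ]; simp only [dif_neg hc]
      rw [this, hEk]
      refine ⟨G.mem_edgeSet.mpr hadj, x, a, rfl, Or.inl hx, ?_⟩
      rintro ⟨l, hxl, hal⟩
      exact hnotCi ((huniq hxl hx) ▸ hal)
    · obtain ⟨⟨hai, hax⟩, hbad⟩ := hBmem a ha
      have hc : Bad G C a ∧ a ∈ C i := ⟨hbad, hai⟩
      have : φ a = s(a, hc.1.choose) := by rw [hφ]; simp only [dif_pos hc]
      rw [this, hEk]
      obtain ⟨hadj, hnc⟩ := hc.1.choose_spec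
      exact ⟨G.mem_edgeSet.mpr hadj, a, hc.1.choose, rfl, Or.inl hai, hnc⟩
  · intro a ha b hb heq
    rw [Finset.coe_union, Set.mem_union] at ha hb
    by_cases hca : Bad G C a ∧ a ∈ C i <;> by_cases hcb : Bad G C b ∧ b ∈ C i
    · rw [hφ] at heq
      simp only [dif_pos hca, dif_pos hcb, Sym2.eq_iff] at heq
      rcases heq with ⟨h1, _⟩ | ⟨h1, h2⟩
      · exact h1
      · exact absurd (h1 ▸ hca.2) (hwit b hcb).2
    · have hbA : b ∈ (A : Set V) := by
        rcases hb with hb | hb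
        · exact hb
        · exact absurd ⟨(hBmem b hb).2, (hBmem b hb).1.1⟩ hcb
      rw [hφ] at heq
      simp only [dif_pos hca, dif_neg hcb, Sym2.eq_iff] at heq
      have haB : a ∈ (B : Set V) := by
        rcases ha with ha | ha
        · exact absurd hca.2 (hAmem a ha).2
        · exact ha
      rcases heq with ⟨h1, h2⟩ | ⟨h1, h2⟩
      · exact absurd (h1 ▸ hca.2) (fun h => (hBmem a haB).1.2 h1)
      · exact absurd (h1 ▸ hca.2) (hAmem b hbA).2
    · have haA : a ∈ (A : Set V) := by
        rcases ha with ha | ha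
        · exact ha
        · exact absurd ⟨(hBmem a ha).2, (hBmem a ha).1.1⟩ hca
      rw [hφ] at heq
      simp only [dif_neg hca, dif_pos hcb, Sym2.eq_iff] at heq
      rcases heq with ⟨h1, h2⟩ | ⟨h1, h2⟩
      · have hbB : b ∈ (B : Set V) := by
          rcases hb with hb | hb
          · exact absurd hcb.2 (hAmem b hb).2
          · exact hb
        exact absurd h1.symm (hBmem b hbB).1.2
      · exact absurd (h2.symm ▸ hcb.2) (hAmem a haA).2
    · have haA : a ∈ (A : Set V) := by
        rcases ha with ha | ha
        · exact ha
        · exact absurd ⟨(hBmem a ha).2, (hBmem a ha).1.1⟩ hca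
      rw [hφ] at heq
      simp only [dif_neg hca, dif_neg hcb, Sym2.eq_iff] at heq
      rcases heq with ⟨_, h2⟩ | ⟨h1, h2⟩
      · exact h2
      · exact absurd h2 (G.ne_of_adj (hAmem a haA).1).symm

end CommAux

open CommAux in
/-- If all communities have the same size `n` and `k ≤ n − 1`, then every
intercommunity edge between the two distinguished communities has nonpositive
α-Ollivier-Ricci curvature for every `α ∈ [0,1]`. -/
theorem nonpos_curvature_of_equal_sizes
    {V : Type*} [Fintype V] (G : SimpleGraph V) {r : ℕ} (hr : 2 ≤ r)
    (C : Fin r → Finset V)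
    (hpart : ∀ v : V, ∃! l, v ∈ C l)
    (hne : ∀ l, (C l).Nonempty)
    (hclique : ∀ l, ∀ u ∈ C l, ∀ v ∈ C l, u ≠ v → G.Adj u v)
    (n : ℕ) (hsize : ∀ l, (C l).card = n)
    (i j : Fin r) (hij : i ≠ j)
    (k : ℕ)
    (hk : k = {e ∈ G.edgeSet | ∃ u v : V, e = s(u, v) ∧ (u ∈ C i ∨ u ∈ C j) ∧
      ¬ ∃ l, u ∈ C l ∧ v ∈ C l}.ncard)
    (hbound : k + 1 ≤ n)
    (α : ℝ) (hα0 : 0 ≤ α) (hα1 : α ≤ 1)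
    (x y : V) (hx : x ∈ C i) (hy : y ∈ C j) (hxy : G.Adj x y) :
    kappa G α x y ≤ 0 := by
  classical
  have huniq : ∀ {a : V} {l l' : Fin r}, a ∈ C l → a ∈ C l' → l = l' :=
    fun {a l l'} h h' => ((hpart a).unique h h')
  have hyi : y ∉ C i := fun h => hij (huniq h hy)
  have hxj : x ∉ C j := fun h => hij (huniq hx h)
  have hBadx : Bad G C x := by
    refine ⟨y, hxy, ?_⟩
    rintro ⟨l, hxl, hyl⟩
    exact hyi ((huniq hxl hx) ▸ hyl)
  have hBady : Bad G C y := by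
    refine ⟨x, hxy.symm, ?_⟩
    rintro ⟨l, hyl, hxl⟩
    exact hxj ((huniq hyl hy) ▸ hxl)
  have hn1 : 1 ≤ n := by omega
  set F : V → ℝ := fco G C i j with hFdef
  have hfx : F x = 1 := by
    rw [hFdef]; unfold fco; rw [if_pos hx, if_pos hBadx]
  have hfy : F y = 0 := by
    rw [hFdef]; unfold fco; rw [if_neg hyi, if_pos hy, if_pos hBady]
  -- neighborhoods
  set Nx : Finset V := Finset.univ.filter (fun z => G.Adj x z) with hNxdef
  set Ny : Finset V := Finset.univ.filter (fun z => G.Adj y z) with hNydef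
  have hmemNx : ∀ z, z ∈ Nx ↔ G.Adj x z := by intro z; simp [hNxdef]
  have hmemNy : ∀ z, z ∈ Ny ↔ G.Adj y z := by intro z; simp [hNydef]
  have hNxI : Nx.filter (· ∈ C i) = (C i).erase x := by
    ext z
    simp only [Finset.mem_filter, Finset.mem_erase, hmemNx z]
    constructor
    · rintro ⟨hadj, hz⟩
      exact ⟨fun h => (G.ne_of_adj hadj) h.symm, hz⟩
    · rintro ⟨hzx, hz⟩
      exact ⟨hclique i x hx z hz (fun h => hzx h.symm), hz⟩
  have hNyJ : Ny.filter (· ∈ C j) = (C j).erase y := by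
    ext z
    simp only [Finset.mem_filter, Finset.mem_erase, hmemNy z]
    constructor
    · rintro ⟨hadj, hz⟩
      exact ⟨fun h => (G.ne_of_adj hadj) h.symm, hz⟩
    · rintro ⟨hzy, hz⟩
      exact ⟨hclique j y hy z hz (fun h => hzy h.symm), hz⟩
  set tx : ℕ := (Nx.filter (· ∉ C i)).card with htxdef
  set ty : ℕ := (Ny.filter (· ∉ C j)).card with htydef
  set bx : ℕ := (((C i).erase x).filter (Bad G C)).card with hbxdef
  set by' : ℕ := (((C j).erase y).filter (Bad G C)).card with hbydef
  have hcardNx : Nx.card = (n - 1) + tx := by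
    rw [← Finset.card_filter_add_card_filter_not (s := Nx) (p := (· ∈ C i)), hNxI,
      Finset.card_erase_of_mem hx, hsize i]
  have hcardNy : Ny.card = (n - 1) + ty := by
    rw [← Finset.card_filter_add_card_filter_not (s := Ny) (p := (· ∈ C j)), hNyJ,
      Finset.card_erase_of_mem hy, hsize j]
  -- counting bounds
  have hK1 : tx + bx ≤ k := by
    rw [hk, htxdef, hbxdef, hNxdef]
    exact inj_bound G C huniq i j x hx
  have hK2 : ty + by' ≤ k := by
    rw [hk, htydef, hbydef, hNydef]
    have hsym : {e ∈ G.edgeSet | ∃ u v : V, e = s(u, v) ∧ (u ∈ C j ∨ u ∈ C i) ∧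
          ¬ ∃ l, u ∈ C l ∧ v ∈ C l}
        = {e ∈ G.edgeSet | ∃ u v : V, e = s(u, v) ∧ (u ∈ C i ∨ u ∈ C j) ∧
          ¬ ∃ l, u ∈ C l ∧ v ∈ C l} := by
      ext e
      constructor <;> rintro ⟨he, u, v, rfl, hor, hnc⟩ <;> exact ⟨he, u, v, rfl, hor.symm, hnc⟩
    rw [← hsym]
    exact inj_bound G C huniq j i y hy
  -- sums of f over the neighborhoods
  have hSx : 2 * ((n:ℝ) - 1) - bx ≤ ∑ z ∈ Nx, F z := by
    rw [← Finset.sum_filter_add_sum_filter_not Nx (· ∈ C i)]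
    have part1 : 2 * ((n:ℝ) - 1) - bx ≤ ∑ z ∈ Nx.filter (· ∈ C i), F z := by
      rw [hNxI]
      have e1 : ∀ z ∈ (C i).erase x, F z = 2 - (if Bad G C z then (1:ℝ) else 0) := by
        intro z hz
        have hzi : z ∈ C i := Finset.mem_of_mem_erase hz
        rw [hFdef]; unfold fco
        rw [if_pos hzi]
        split_ifs <;> norm_num
      rw [Finset.sum_congr rfl e1, Finset.sum_sub_distrib, Finset.sum_const,
        Finset.sum_boole, Finset.card_erase_of_mem hx, hsize i]
      rw [nsmul_eq_mul, Nat.cast_sub hn1]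
      rw [hbxdef]
      push_cast
      ring_nf
      exact le_refl _
    have part2 : (0:ℝ) ≤ ∑ z ∈ Nx.filter (· ∉ C i), F z := by
      apply Finset.sum_nonneg
      intro z hz
      rw [Finset.mem_filter] at hz
      obtain ⟨hzNx, hzi⟩ := hz
      have hadj : G.Adj x z := (hmemNx z).mp hzNx
      rw [hFdef]; unfold fco
      rw [if_neg hzi]
      by_cases hzj : z ∈ C j
      · have hbz : Bad G C z := by
          refine ⟨x, hadj.symm, ?_⟩
          rintro ⟨l, hzl, hxl⟩
          exact hzi ((huniq hxl hx) ▸ hzl)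
        rw [if_pos hzj, if_pos hbz]
      · rw [if_neg hzj]; norm_num
    linarith
  have hSy : ∑ z ∈ Ny, F z ≤ -((n:ℝ) - 1) + by' + ty := by
    rw [← Finset.sum_filter_add_sum_filter_not Ny (· ∈ C j)]
    have part1 : ∑ z ∈ Ny.filter (· ∈ C j), F z ≤ -((n:ℝ) - 1) + by' := by
      rw [hNyJ]
      have e1 : ∀ z ∈ (C j).erase y, F z ≤ -1 + (if Bad G C z then (1:ℝ) else 0) := by
        intro z hz
        have hzj : z ∈ C j := Finset.mem_of_mem_erase hz
        have hzi : z ∉ C i := fun h => hij (huniq h hzj)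
        rw [hFdef]; unfold fco
        rw [if_neg hzi, if_pos hzj]
        split_ifs <;> norm_num
      calc ∑ z ∈ (C j).erase y, F z
          ≤ ∑ z ∈ (C j).erase y, (-1 + (if Bad G C z then (1:ℝ) else 0)) :=
            Finset.sum_le_sum e1
        _ = -((n:ℝ) - 1) + by' := by
            rw [Finset.sum_add_distrib, Finset.sum_const, Finset.sum_boole,
              Finset.card_erase_of_mem hy, hsize j, nsmul_eq_mul, Nat.cast_sub hn1,
              hbydef]
            push_cast
            ring
    have part2 : ∑ z ∈ Ny.filter (· ∉ C j), F z ≤ ty := by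
      have e2 : ∀ z ∈ Ny.filter (· ∉ C j), F z ≤ 1 := by
        intro z hz
        rw [Finset.mem_filter] at hz
        obtain ⟨hzNy, hzj⟩ := hz
        have hadj : G.Adj y z := (hmemNy z).mp hzNy
        rw [hFdef]; unfold fco
        by_cases hzi : z ∈ C i
        · have hbz : Bad G C z := by
            refine ⟨y, hadj.symm, ?_⟩
            rintro ⟨l, hzl, hyl⟩
            exact hzj ((huniq hyl hy) ▸ hzl)
          rw [if_pos hzi, if_pos hbz]
        · rw [if_neg hzi, if_neg hzj]
      calc ∑ z ∈ Ny.filter (· ∉ C j), F z ≤ ∑ _z ∈ Ny.filter (· ∉ C j), (1:ℝ) :=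
            Finset.sum_le_sum e2
        _ = ty := by rw [Finset.sum_const, nsmul_eq_mul, mul_one, htydef]
    linarith
  -- degrees as reals
  set Dx : ℝ := (Nx.card : ℝ) with hDxdef
  set Dy : ℝ := (Ny.card : ℝ) with hDydef
  have hDxval : Dx = ((n:ℝ) - 1) + tx := by
    rw [hDxdef, hcardNx]
    push_cast [Nat.cast_sub hn1]
    ring
  have hDyval : Dy = ((n:ℝ) - 1) + ty := by
    rw [hDydef, hcardNy]
    push_cast [Nat.cast_sub hn1]
    ring
  have hDx_pos : 0 < Dx := by
    rw [hDxdef]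
    exact_mod_cast Finset.card_pos.mpr ⟨y, (hmemNx y).mpr hxy⟩
  have hDy_pos : 0 < Dy := by
    rw [hDydef]
    exact_mod_cast Finset.card_pos.mpr ⟨x, (hmemNy x).mpr hxy.symm⟩
  have hncx : ((G.neighborSet x).ncard : ℝ) = Dx := by
    rw [hDxdef]
    congr 1
    rw [show G.neighborSet x = ↑Nx by ext z; simp [hNxdef, SimpleGraph.mem_neighborSet],
      Set.ncard_coe_finset]
  have hncy : ((G.neighborSet y).ncard : ℝ) = Dy := by
    rw [hDydef]
    congr 1
    rw [show G.neighborSet y = ↑Ny by ext z; simp [hNydef, SimpleGraph.mem_neighborSet],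
      Set.ncard_coe_finset]
  -- the key fraction bound
  set Sx : ℝ := ∑ z ∈ Nx, F z with hSxdef
  set Sy : ℝ := ∑ z ∈ Ny, F z with hSydef
  have hkr : (k:ℝ) ≤ (n:ℝ) - 1 := by
    have : (k:ℝ) + 1 ≤ n := by exact_mod_cast hbound
    linarith
  have hK1r : (tx:ℝ) + bx ≤ k := by exact_mod_cast hK1
  have hK2r : (ty:ℝ) + by' ≤ k := by exact_mod_cast hK2
  have htx0 : (0:ℝ) ≤ tx := Nat.cast_nonneg _
  have hty0 : (0:ℝ) ≤ ty := Nat.cast_nonneg _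
  have hUx : 2*(tx:ℝ) + bx ≤ Dx := by rw [hDxval]; linarith
  have hUy : 2*(ty:ℝ) + by' ≤ Dy := by rw [hDyval]; linarith
  have hSx' : 2*Dx - (2*(tx:ℝ) + bx) ≤ Sx := by
    rw [hDxval, hSxdef]
    linarith [hSx]
  have hSy' : Sy ≤ -Dy + (2*(ty:ℝ) + by') := by
    rw [hDyval, hSydef]
    linarith [hSy]
  have hfrac : 1 ≤ Sx/Dx - Sy/Dy := by
    rw [div_sub_div _ _ (ne_of_gt hDx_pos) (ne_of_gt hDy_pos),
      le_div_iff₀ (mul_pos hDx_pos hDy_pos)]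
    nlinarith [mul_le_mul_of_nonneg_right hSx' hDy_pos.le,
      mul_le_mul_of_nonneg_right hSy' hDx_pos.le,
      mul_le_mul_of_nonneg_right hUx hDy_pos.le,
      mul_le_mul_of_nonneg_right hUy hDx_pos.le]
  -- expectations
  have hEx : ∑ z, F z * lazyWalk G α x z = α * 1 + ((1 - α)/Dx) * Sx := by
    rw [sum_mul_lazy G α x F, hfx, hncx, ← hNxdef, hSxdef]
  have hEy : ∑ z, F z * lazyWalk G α y z = α * 0 + ((1 - α)/Dy) * Sy := by
    rw [sum_mul_lazy G α y F, hfy, hncy, ← hNydef, hSydef]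
  have hmain : 1 ≤ ∑ z, F z * lazyWalk G α x z - ∑ z, F z * lazyWalk G α y z := by
    rw [hEx, hEy]
    have e1 : ((1 - α)/Dx) * Sx = (1 - α) * (Sx/Dx) := by ring
    have e2 : ((1 - α)/Dy) * Sy = (1 - α) * (Sy/Dy) := by ring
    rw [e1, e2]
    have h1α : (0:ℝ) ≤ 1 - α := by linarith
    nlinarith [mul_le_mul_of_nonneg_left hfrac h1α]
  -- masses
  have hmx1 : ∑ z, lazyWalk G α x z = 1 := by
    have h := sum_mul_lazy G α x (fun _ => 1)
    simp only [one_mul, mul_one] at h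
    rw [h, Finset.sum_const, hncx, ← hNxdef, nsmul_eq_mul, mul_one,
      div_mul_cancel₀ _ (ne_of_gt hDx_pos)]
    ring
  have hmy1 : ∑ z, lazyWalk G α y z = 1 := by
    have h := sum_mul_lazy G α y (fun _ => 1)
    simp only [one_mul, mul_one] at h
    rw [h, Finset.sum_const, hncy, ← hNydef, nsmul_eq_mul, mul_one,
      div_mul_cancel₀ _ (ne_of_gt hDy_pos)]
    ring
  -- support of the lazy walks
  have hsupp : ∀ (w u : V), 0 < lazyWalk G α w u → u = w ∨ G.Adj w u := by
    intro w u hu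
    by_contra hc
    push_neg at hc
    unfold lazyWalk at hu
    rw [if_neg hc.1, if_neg hc.2] at hu
    exact lt_irrefl 0 hu
  -- lower bound the Wasserstein distance
  have hW : 1 ≤ Wass G (lazyWalk G α x) (lazyWalk G α y) := by
    apply le_csInf
    · refine ⟨∑ a : V, ∑ b : V, (lazyWalk G α x a * lazyWalk G α y b) * (G.dist a b : ℝ),
        fun a b => lazyWalk G α x a * lazyWalk G α y b, ?_, rfl⟩
      refine ⟨fun a b => mul_nonneg (lazy_nonneg G hα0 hα1 x a) (lazy_nonneg G hα0 hα1 y b),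
        fun a => ?_, fun b => ?_⟩
      · rw [← Finset.mul_sum, hmy1, mul_one]
      · rw [← Finset.sum_mul, hmx1, one_mul]
    · rintro c ⟨π, ⟨hπ0, hπ1, hπ2⟩, rfl⟩
      have hpt : ∀ a b, π a b * (F a - F b) ≤ π a b * (G.dist a b : ℝ) := by
        intro a b
        rcases eq_or_lt_of_le (hπ0 a b) with h | h
        · rw [← h]; simp
        · apply mul_le_mul_of_nonneg_left _ (le_of_lt h)
          have hma : 0 < lazyWalk G α x a := by
            have : π a b ≤ ∑ b', π a b' :=
              Finset.single_le_sum (fun b' _ => hπ0 a b') (Finset.mem_univ b)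
            rw [hπ1 a] at this
            linarith
          have hmb : 0 < lazyWalk G α y b := by
            have : π a b ≤ ∑ a', π a' b :=
              Finset.single_le_sum (fun a' _ => hπ0 a' b) (Finset.mem_univ a)
            rw [hπ2 b] at this
            linarith
          have hra : G.Reachable a x := by
            rcases hsupp x a hma with h' | h'
            · rw [h']
            · exact (h'.symm).reachable
          have hrb : G.Reachable y b := by
            rcases hsupp y b hmb with h' | h'
            · rw [h']
            · exact h'.reachable
          exact fco_lip huniq hij (hra.trans ((hxy.reachable).trans hrb))
      calc (1:ℝ) ≤ ∑ z, F z * lazyWalk G α x z - ∑ z, F z * lazyWalk G α y z := hmain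
        _ = ∑ a : V, ∑ b : V, π a b * (F a - F b) := by
            have inner : ∀ a, ∑ b, π a b * (F a - F b)
                = F a * lazyWalk G α x a - ∑ b, π a b * F b := by
              intro a
              simp only [mul_sub]
              rw [Finset.sum_sub_distrib, ← Finset.sum_mul, hπ1 a, mul_comm]
            rw [Finset.sum_congr rfl (fun a _ => inner a), Finset.sum_sub_distrib]
            congr 1
            rw [Finset.sum_comm]
            refine Finset.sum_congr rfl fun b _ => ?_
            rw [← Finset.sum_mul, hπ2 b, mul_comm]
        _ ≤ ∑ a : V, ∑ b : V, π a b * (G.dist a b : ℝ) :=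
            Finset.sum_le_sum fun a _ => Finset.sum_le_sum fun b _ => hpt a b
  unfold kappa
  linarith
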